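/- (Effect-size probability in the Normal–Normal model.) Let θ₁ < θ₀. Then there exist a constant C > 0 and an integer N such that for all n ≥ N, |E_{θ₀}[W((θ₁, ∞)|Xⁿ)] − (1 − Φ(√n(θ₁ − θ₀)/(√2 σ₀)))| ≤ C n^{−1/2}; in particular E_{θ₀}[W((θ₁, ∞)|Xⁿ)] = 1 − Φ(√(n/2)(θ₁ − θ₀)/σ₀) + O(n^{−1/2}) → 1. -/

import Mathlib

open MeasureTheory ProbabilityTheory Real Filter

/-- The density of the standard normal law `N(0,1)`. -/
noncomputable def stdNormalPDF (z : ℝ) : ℝ :=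
  (Real.sqrt (2 * Real.pi))⁻¹ * Real.exp (-(z ^ 2) / 2)

/-- The distribution function of the standard normal law `N(0,1)`. -/
noncomputable def stdNormalCDF (x : ℝ) : ℝ :=
  ∫ z in Set.Iic x, stdNormalPDF z

/-- Prior density times likelihood for the Normal–Normal model. -/
noncomputable def nnKernel (n : ℕ) (μ₀ τ₀ σ₀ : ℝ) (x : Fin n → ℝ) (θ : ℝ) : ℝ :=
  Real.exp (-(θ - μ₀) ^ 2 / (2 * τ₀ ^ 2))
    * ∏ i, Real.exp (-(x i - θ) ^ 2 / (2 * σ₀ ^ 2))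

/-- The posterior distribution of `θ` given the data `x`. -/
noncomputable def nnPosterior (n : ℕ) (μ₀ τ₀ σ₀ : ℝ) (x : Fin n → ℝ) : Measure ℝ :=
  (∫⁻ θ : ℝ, ENNReal.ofReal (nnKernel n μ₀ τ₀ σ₀ x θ))⁻¹
    • volume.withDensity (fun θ => ENNReal.ofReal (nnKernel n μ₀ τ₀ σ₀ x θ))

/-- The law of the data `Xⁿ` i.i.d. `N(θ₀, σ₀²)`. -/
noncomputable def nnData (n : ℕ) (θ₀ σ₀ : ℝ) : Measure (Fin n → ℝ) :=
  Measure.pi fun _ => gaussianReal θ₀ (Real.toNNReal (σ₀ ^ 2))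

open scoped NNReal ENNReal

section Helpers

lemma integrable_gauss_shift {b : ℝ} (hb : 0 < b) (c : ℝ) :
    Integrable (fun z : ℝ => Real.exp (-(z - c) ^ 2 / b)) := by
  have h := (integrable_exp_neg_mul_sq (b := b⁻¹) (by positivity)).comp_sub_right c
  convert h using 2 with z
  congr 1
  field_simp

variable {n : ℕ} {μ₀ τ₀ σ₀ : ℝ}

lemma nnKernel_pos (x : Fin n → ℝ) (θ : ℝ) : 0 < nnKernel n μ₀ τ₀ σ₀ x θ := by
  unfold nnKernel
  positivity

lemma nnKernel_continuous (x : Fin n → ℝ) : Continuous (nnKernel n μ₀ τ₀ σ₀ x) := by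
  unfold nnKernel
  fun_prop

lemma nnKernel_le (x : Fin n → ℝ) (θ : ℝ) :
    nnKernel n μ₀ τ₀ σ₀ x θ ≤ Real.exp (-(θ - μ₀) ^ 2 / (2 * τ₀ ^ 2)) := by
  unfold nnKernel
  refine mul_le_of_le_one_right (Real.exp_nonneg _) ?_
  refine Finset.prod_le_one (fun i _ => Real.exp_nonneg _) (fun i _ => ?_)
  refine Real.exp_le_one_iff.mpr ?_
  exact div_nonpos_of_nonpos_of_nonneg (neg_nonpos.mpr (sq_nonneg _)) (by positivity)

lemma integrable_prior (hτ : 0 < τ₀) (μ₀ : ℝ) :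
    Integrable (fun θ : ℝ => Real.exp (-(θ - μ₀) ^ 2 / (2 * τ₀ ^ 2))) :=
  integrable_gauss_shift (by positivity) μ₀

lemma nnKernel_integrable (hτ : 0 < τ₀) (x : Fin n → ℝ) :
    Integrable (nnKernel n μ₀ τ₀ σ₀ x) := by
  refine (integrable_prior hτ μ₀).mono' (nnKernel_continuous x).aestronglyMeasurable ?_
  refine ae_of_all _ (fun θ => ?_)
  rw [Real.norm_eq_abs, abs_of_pos (nnKernel_pos x θ)]
  exact nnKernel_le x θ

lemma integral_nnKernel_pos (hτ : 0 < τ₀) (x : Fin n → ℝ) :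
    0 < ∫ θ, nnKernel n μ₀ τ₀ σ₀ x θ := by
  rw [integral_pos_iff_support_of_nonneg (fun θ => (nnKernel_pos x θ).le)
    (nnKernel_integrable hτ x)]
  have : Function.support (nnKernel n μ₀ τ₀ σ₀ x) = Set.univ :=
    Set.eq_univ_of_forall (fun θ => (nnKernel_pos x θ).ne')
  rw [this]
  simp

lemma lintegral_nnKernel (hτ : 0 < τ₀) (x : Fin n → ℝ) :
    ∫⁻ θ, ENNReal.ofReal (nnKernel n μ₀ τ₀ σ₀ x θ)
      = ENNReal.ofReal (∫ θ, nnKernel n μ₀ τ₀ σ₀ x θ) :=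
  (ofReal_integral_eq_lintegral_ofReal (nnKernel_integrable hτ x)
    (ae_of_all _ (fun θ => (nnKernel_pos x θ).le))).symm

lemma lintegral_nnKernel_set (hτ : 0 < τ₀) (x : Fin n → ℝ) (A : Set ℝ) :
    ∫⁻ θ in A, ENNReal.ofReal (nnKernel n μ₀ τ₀ σ₀ x θ)
      = ENNReal.ofReal (∫ θ in A, nnKernel n μ₀ τ₀ σ₀ x θ) :=
  (ofReal_integral_eq_lintegral_ofReal (nnKernel_integrable hτ x).restrict
    (ae_of_all _ (fun θ => (nnKernel_pos x θ).le))).symm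

lemma posterior_apply (hτ : 0 < τ₀) (x : Fin n → ℝ) {A : Set ℝ} (hA : MeasurableSet A) :
    (nnPosterior n μ₀ τ₀ σ₀ x A).toReal
      = (∫ θ in A, nnKernel n μ₀ τ₀ σ₀ x θ) / (∫ θ, nnKernel n μ₀ τ₀ σ₀ x θ) := by
  rw [nnPosterior, Measure.smul_apply, withDensity_apply _ hA, smul_eq_mul,
    lintegral_nnKernel hτ x, lintegral_nnKernel_set hτ x, ENNReal.toReal_mul,
    ENNReal.toReal_inv, ENNReal.toReal_ofReal (integral_nonneg (fun θ => (nnKernel_pos x θ).le)),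
    ENNReal.toReal_ofReal (integral_nonneg (fun θ => (nnKernel_pos x θ).le))]
  rw [inv_mul_eq_div]

lemma posterior_isProb (hτ : 0 < τ₀) (x : Fin n → ℝ) :
    IsProbabilityMeasure (nnPosterior n μ₀ τ₀ σ₀ x) := by
  constructor
  rw [nnPosterior, Measure.smul_apply, withDensity_apply _ MeasurableSet.univ,
    Measure.restrict_univ, smul_eq_mul, lintegral_nnKernel hτ x]
  refine ENNReal.inv_mul_cancel ?_ (by simp)
  simp only [ne_eq, ENNReal.ofReal_eq_zero, not_le]
  exact integral_nnKernel_pos hτ x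

lemma posterior_Ioi (hτ : 0 < τ₀) (x : Fin n → ℝ) (θ₁ : ℝ) :
    (nnPosterior n μ₀ τ₀ σ₀ x (Set.Ioi θ₁)).toReal
      = 1 - (nnPosterior n μ₀ τ₀ σ₀ x (Set.Iic θ₁)).toReal := by
  haveI := posterior_isProb (n := n) (μ₀ := μ₀) (σ₀ := σ₀) hτ x
  rw [← Set.compl_Iic, prob_compl_eq_one_sub measurableSet_Iic,
    ENNReal.toReal_sub_of_le prob_le_one ENNReal.one_ne_top, ENNReal.toReal_one]

lemma posterior_nonneg (x : Fin n → ℝ) (A : Set ℝ) :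
    0 ≤ (nnPosterior n μ₀ τ₀ σ₀ x A).toReal := ENNReal.toReal_nonneg

lemma posterior_le_one (hτ : 0 < τ₀) (x : Fin n → ℝ) (A : Set ℝ) :
    (nnPosterior n μ₀ τ₀ σ₀ x A).toReal ≤ 1 := by
  haveI := posterior_isProb (n := n) (μ₀ := μ₀) (σ₀ := σ₀) hτ x
  have := prob_le_one (μ := nnPosterior n μ₀ τ₀ σ₀ x) (s := A)
  simpa using ENNReal.toReal_mono ENNReal.one_ne_top this

lemma nnKernel_meas2 :
    Continuous (fun p : (Fin n → ℝ) × ℝ => nnKernel n μ₀ τ₀ σ₀ p.1 p.2) := by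
  unfold nnKernel
  fun_prop

lemma measurable_setIntegral_nnKernel (A : Set ℝ) :
    Measurable (fun x : Fin n → ℝ => ∫ θ in A, nnKernel n μ₀ τ₀ σ₀ x θ) := by
  have h : StronglyMeasurable (fun p : (Fin n → ℝ) × ℝ => nnKernel n μ₀ τ₀ σ₀ p.1 p.2) :=
    nnKernel_meas2.stronglyMeasurable
  exact (h.integral_prod_right' (ν := volume.restrict A)).measurable

lemma measurable_F (hτ : 0 < τ₀) (θ₁ : ℝ) :
    Measurable (fun x : Fin n → ℝ => (nnPosterior n μ₀ τ₀ σ₀ x (Set.Iic θ₁)).toReal) := by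
  have : (fun x : Fin n → ℝ => (nnPosterior n μ₀ τ₀ σ₀ x (Set.Iic θ₁)).toReal)
      = fun x => (∫ θ in Set.Iic θ₁, nnKernel n μ₀ τ₀ σ₀ x θ)
          / (∫ θ, nnKernel n μ₀ τ₀ σ₀ x θ) := by
    funext x; exact posterior_apply hτ x measurableSet_Iic
  rw [this]
  have h2 : Measurable (fun x : Fin n → ℝ => ∫ θ, nnKernel n μ₀ τ₀ σ₀ x θ) := by
    have := measurable_setIntegral_nnKernel (n := n) (μ₀ := μ₀) (τ₀ := τ₀) (σ₀ := σ₀)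
      Set.univ
    simpa using this
  exact (measurable_setIntegral_nnKernel _).div h2

lemma gaussianPDFReal_mul_exp {v : ℝ≥0} (hv : 0 < (v:ℝ)) (θ₀ c x : ℝ) :
    gaussianPDFReal θ₀ v x * Real.exp (c * x)
      = Real.exp (c * θ₀ + c ^ 2 * v / 2) * gaussianPDFReal (θ₀ + c * v) v x := by
  simp only [gaussianPDFReal]
  rw [mul_assoc, ← Real.exp_add, mul_left_comm, ← Real.exp_add]
  congr 1
  field_simp
  ring

lemma integral_exp_mul_gaussianReal {v : ℝ≥0} (hv : v ≠ 0) (θ₀ c : ℝ) :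
    ∫ y, Real.exp (c * y) ∂(gaussianReal θ₀ v) = Real.exp (c * θ₀ + c ^ 2 * v / 2) := by
  have hv' : 0 < (v:ℝ) := by
    have := pos_iff_ne_zero.mpr hv
    exact_mod_cast this
  rw [gaussianReal_of_var_ne_zero _ hv]
  have hmeas : Measurable fun x => Real.toNNReal (gaussianPDFReal θ₀ v x) :=
    (measurable_gaussianPDFReal _ _).real_toNNReal
  have hrw : gaussianPDF θ₀ v = fun x => ((Real.toNNReal (gaussianPDFReal θ₀ v x) : ℝ≥0) : ℝ≥0∞) := rfl
  rw [hrw, integral_withDensity_eq_integral_smul hmeas]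
  have : ∀ x, (Real.toNNReal (gaussianPDFReal θ₀ v x) : ℝ≥0) • Real.exp (c * x)
      = Real.exp (c * θ₀ + c ^ 2 * v / 2) * gaussianPDFReal (θ₀ + c * v) v x := by
    intro x
    rw [NNReal.smul_def, smul_eq_mul, Real.coe_toNNReal _ (gaussianPDFReal_nonneg _ _ _),
      gaussianPDFReal_mul_exp hv']
  simp_rw [this]
  rw [integral_const_mul, integral_gaussianPDFReal_eq_one _ hv, mul_one]

lemma integrable_exp_mul_gaussianReal {v : ℝ≥0} (hv : v ≠ 0) (θ₀ c : ℝ) :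
    Integrable (fun y => Real.exp (c * y)) (gaussianReal θ₀ v) := by
  have hv' : 0 < (v:ℝ) := by
    have := pos_iff_ne_zero.mpr hv
    exact_mod_cast this
  rw [gaussianReal_of_var_ne_zero _ hv]
  have hmeas : Measurable fun x => Real.toNNReal (gaussianPDFReal θ₀ v x) :=
    (measurable_gaussianPDFReal _ _).real_toNNReal
  have hrw : gaussianPDF θ₀ v = fun x => ((Real.toNNReal (gaussianPDFReal θ₀ v x) : ℝ≥0) : ℝ≥0∞) := rfl
  rw [hrw, integrable_withDensity_iff_integrable_smul hmeas]
  have : (fun x => (Real.toNNReal (gaussianPDFReal θ₀ v x) : ℝ≥0) • Real.exp (c * x))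
      = fun x => Real.exp (c * θ₀ + c ^ 2 * v / 2) * gaussianPDFReal (θ₀ + c * v) v x := by
    funext x
    rw [NNReal.smul_def, smul_eq_mul, Real.coe_toNNReal _ (gaussianPDFReal_nonneg _ _ _),
      gaussianPDFReal_mul_exp hv']
  rw [this]
  exact (integrable_gaussianPDFReal _ _).const_mul _

lemma integral_pi_pow {n : ℕ} (μ : Measure ℝ) [SigmaFinite μ] (f : ℝ → ℝ) :
    ∫ x : Fin n → ℝ, ∏ i, f (x i) ∂(Measure.pi fun _ => μ) = (∫ y, f y ∂μ) ^ n := by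
  letI : MeasureSpace ℝ := ⟨μ⟩
  haveI : SigmaFinite (volume : Measure ℝ) := ‹SigmaFinite μ›
  have h := MeasureTheory.integral_fintype_prod_eq_pow (𝕜 := ℝ) (ι := Fin n) f (μ := μ)
  simpa using h

lemma integrable_pi_prod {n : ℕ} (μ : Measure ℝ) [SigmaFinite μ] (f : ℝ → ℝ)
    (hf : Integrable f μ) :
    Integrable (fun x : Fin n → ℝ => ∏ i, f (x i)) (Measure.pi fun _ => μ) := by
  letI : MeasureSpace ℝ := ⟨μ⟩
  haveI : SigmaFinite (volume : Measure ℝ) := ‹SigmaFinite μ›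
  exact MeasureTheory.Integrable.fintype_prod (𝕜 := ℝ) (fun _ => hf)

lemma nnData_tail_le {θ₀ σ₀ : ℝ} (hσ : 0 < σ₀) {n : ℕ} {lam r : ℝ} (hlam : 0 < lam) :
    ((nnData n θ₀ σ₀) {x | ∑ i, x i ≤ r}).toReal
      ≤ Real.exp (lam * r + n * (-(lam * θ₀) + lam ^ 2 * σ₀ ^ 2 / 2)) := by
  have hv : Real.toNNReal (σ₀ ^ 2) ≠ 0 := by
    simp only [ne_eq, Real.toNNReal_eq_zero, not_le]
    positivity
  have hvr : ((Real.toNNReal (σ₀ ^ 2) : ℝ≥0) : ℝ) = σ₀ ^ 2 :=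
    Real.coe_toNNReal _ (sq_nonneg _)
  set ν := gaussianReal θ₀ (Real.toNNReal (σ₀ ^ 2)) with hν
  have hprod : ∀ x : Fin n → ℝ, Real.exp (-lam * ∑ i, x i) = ∏ i, Real.exp (-lam * (x i)) := by
    intro x
    rw [← Real.exp_sum, ← Finset.mul_sum]
  have hint : Integrable (fun x : Fin n → ℝ => Real.exp (-lam * ∑ i, x i)) (nnData n θ₀ σ₀) := by
    simp_rw [hprod]
    exact integrable_pi_prod ν _ (integrable_exp_mul_gaussianReal hv θ₀ (-lam))
  have hIeq : ∫ x, Real.exp (-lam * ∑ i, x i) ∂(nnData n θ₀ σ₀)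
      = Real.exp (-lam * θ₀ + lam ^ 2 * σ₀ ^ 2 / 2) ^ n := by
    simp_rw [hprod]
    rw [nnData, integral_pi_pow ν (fun y => Real.exp (-lam * y)),
      integral_exp_mul_gaussianReal hv θ₀ (-lam)]
    congr 2
    rw [hvr]; ring
  have hset : {x : Fin n → ℝ | ∑ i, x i ≤ r}
      = {x : Fin n → ℝ | Real.exp (-lam * r) ≤ Real.exp (-lam * ∑ i, x i)} := by
    ext x
    simp only [Set.mem_setOf_eq, Real.exp_le_exp]
    constructor
    · intro h; nlinarith
    · intro h; nlinarith
  have hmark := mul_meas_ge_le_integral_of_nonneg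
    (ae_of_all _ (fun x : Fin n → ℝ => (Real.exp_pos (-lam * ∑ i, x i)).le)) hint
    (Real.exp (-lam * r))
  rw [hIeq] at hmark
  rw [hset]
  have hepos := Real.exp_pos (-lam * r)
  rw [← le_div_iff₀' hepos] at hmark
  refine hmark.trans (le_of_eq ?_)
  rw [← Real.exp_nat_mul, div_eq_mul_inv, ← Real.exp_neg, ← Real.exp_add]
  congr 1
  ring

lemma nnData_tail_ge {θ₀ σ₀ : ℝ} (hσ : 0 < σ₀) {n : ℕ} {lam r : ℝ} (hlam : 0 < lam) :
    ((nnData n θ₀ σ₀) {x | r ≤ ∑ i, x i}).toReal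
      ≤ Real.exp (-(lam * r) + n * (lam * θ₀ + lam ^ 2 * σ₀ ^ 2 / 2)) := by
  have hv : Real.toNNReal (σ₀ ^ 2) ≠ 0 := by
    simp only [ne_eq, Real.toNNReal_eq_zero, not_le]
    positivity
  have hvr : ((Real.toNNReal (σ₀ ^ 2) : ℝ≥0) : ℝ) = σ₀ ^ 2 :=
    Real.coe_toNNReal _ (sq_nonneg _)
  set ν := gaussianReal θ₀ (Real.toNNReal (σ₀ ^ 2)) with hν
  have hprod : ∀ x : Fin n → ℝ, Real.exp (lam * ∑ i, x i) = ∏ i, Real.exp (lam * (x i)) := by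
    intro x
    rw [← Real.exp_sum, ← Finset.mul_sum]
  have hint : Integrable (fun x : Fin n → ℝ => Real.exp (lam * ∑ i, x i)) (nnData n θ₀ σ₀) := by
    simp_rw [hprod]
    exact integrable_pi_prod ν _ (integrable_exp_mul_gaussianReal hv θ₀ lam)
  have hIeq : ∫ x, Real.exp (lam * ∑ i, x i) ∂(nnData n θ₀ σ₀)
      = Real.exp (lam * θ₀ + lam ^ 2 * σ₀ ^ 2 / 2) ^ n := by
    simp_rw [hprod]
    rw [nnData, integral_pi_pow ν (fun y => Real.exp (lam * y)),
      integral_exp_mul_gaussianReal hv θ₀ lam]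
    congr 2
    rw [hvr]
  have hset : {x : Fin n → ℝ | r ≤ ∑ i, x i}
      = {x : Fin n → ℝ | Real.exp (lam * r) ≤ Real.exp (lam * ∑ i, x i)} := by
    ext x
    simp only [Set.mem_setOf_eq, Real.exp_le_exp]
    constructor
    · intro h; nlinarith
    · intro h; nlinarith
  have hmark := mul_meas_ge_le_integral_of_nonneg
    (ae_of_all _ (fun x : Fin n → ℝ => (Real.exp_pos (lam * ∑ i, x i)).le)) hint
    (Real.exp (lam * r))
  rw [hIeq] at hmark
  rw [hset]
  have hepos := Real.exp_pos (lam * r)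
  rw [← le_div_iff₀' hepos] at hmark
  refine hmark.trans (le_of_eq ?_)
  rw [← Real.exp_nat_mul, div_eq_mul_inv, ← Real.exp_neg, ← Real.exp_add]
  congr 1
  ring

lemma integrable_half : Integrable (fun z : ℝ => Real.exp (-z ^ 2 / 2)) := by
  have := integrable_gauss_shift (b := 2) two_pos 0
  simpa using this

lemma stdNormalCDF_nonneg (t : ℝ) : 0 ≤ stdNormalCDF t := by
  refine integral_nonneg (fun z => ?_)
  unfold stdNormalPDF
  positivity

lemma stdNormalCDF_le {t : ℝ} (ht : t ≤ 0) :
    stdNormalCDF t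
      ≤ (Real.sqrt (2 * Real.pi))⁻¹ * (∫ z : ℝ, Real.exp (-z ^ 2 / 2)) * Real.exp (-t ^ 2 / 2) := by
  unfold stdNormalCDF stdNormalPDF
  rw [integral_const_mul, mul_assoc]
  refine mul_le_mul_of_nonneg_left ?_ (by positivity)
  have step1 : ∫ z in Set.Iic t, Real.exp (-z ^ 2 / 2)
      ≤ ∫ z in Set.Iic t, Real.exp (-t ^ 2 / 2) * Real.exp (-(z - t) ^ 2 / 2) := by
    refine setIntegral_mono_on integrable_half.integrableOn
      (((integrable_gauss_shift two_pos t).const_mul _).integrableOn) measurableSet_Iic ?_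
    intro z hz
    rw [Set.mem_Iic] at hz
    rw [← Real.exp_add]
    refine Real.exp_le_exp.mpr ?_
    nlinarith [mul_nonneg (neg_nonneg.mpr ht) (sub_nonneg.mpr hz)]
  refine step1.trans ?_
  rw [integral_const_mul]
  rw [mul_comm (∫ z : ℝ, Real.exp (-z ^ 2 / 2)) _]
  refine mul_le_mul_of_nonneg_left ?_ (Real.exp_nonneg _)
  have step2 : ∫ z in Set.Iic t, Real.exp (-(z - t) ^ 2 / 2)
      ≤ ∫ z : ℝ, Real.exp (-(z - t) ^ 2 / 2) :=
    setIntegral_le_integral (integrable_gauss_shift two_pos t)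
      (ae_of_all _ (fun z => (Real.exp_pos _).le))
  refine step2.trans (le_of_eq ?_)
  exact integral_sub_right_eq_self (fun a : ℝ => Real.exp (-a ^ 2 / 2)) t

end Helpers

section Core
variable {μ₀ τ₀ σ₀ θ₀ θ₁ : ℝ}

lemma nnKernel_factor {n : ℕ} (hσ : 0 < σ₀) (hτ : 0 < τ₀) (x : Fin n → ℝ) {b : ℝ}
    (hb : (n:ℝ) * b = ∑ i, x i) (θ : ℝ) :
    nnKernel n μ₀ τ₀ σ₀ x θ
      = Real.exp (-((∑ i, (x i)^2) - n * b^2) / (2*σ₀^2))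
        * Real.exp (-(θ-μ₀)^2/(2*τ₀^2) - n*(θ-b)^2/(2*σ₀^2)) := by
  unfold nnKernel
  have hsum : ∑ i, (x i - θ)^2 = (∑ i, (x i)^2) - 2*θ*(∑ i, x i) + n*θ^2 := by
    have h0 : ∀ i ∈ Finset.univ, (x i - θ)^2 = (x i)^2 - 2*θ*(x i) + θ^2 := fun i _ => by ring
    rw [Finset.sum_congr rfl h0, Finset.sum_add_distrib, Finset.sum_sub_distrib,
      ← Finset.mul_sum, Finset.sum_const, Finset.card_univ, Fintype.card_fin, nsmul_eq_mul]
  rw [← Real.exp_sum, ← Real.exp_add, ← Real.exp_add]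
  congr 1
  have h1 : ∑ i, -(x i - θ)^2 / (2*σ₀^2) = -(∑ i, (x i - θ)^2) / (2*σ₀^2) := by
    rw [← Finset.sum_div, ← Finset.sum_neg_distrib]
  rw [h1, hsum, ← hb]
  field_simp
  ring

set_option maxHeartbeats 2000000 in
lemma ratio_bound (hσ : 0 < σ₀) (hτ : 0 < τ₀) (hθ : θ₁ < θ₀) {n : ℕ} (hn : 1 ≤ n)
    (x : Fin n → ℝ)
    (hx1 : (n:ℝ) * ((θ₀+θ₁)/2) ≤ ∑ i, x i)
    (hx2 : ∑ i, x i ≤ (n:ℝ) * (θ₀ + (θ₀-θ₁)/2)) :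
    (nnPosterior n μ₀ τ₀ σ₀ x (Set.Iic θ₁)).toReal
      ≤ (∫ θ : ℝ, Real.exp (-(θ-μ₀)^2/(2*τ₀^2)))
        * Real.exp ((max |(θ₀+θ₁)/2| (|θ₀+(θ₀-θ₁)/2|+1) + |μ₀|)^2/(2*τ₀^2) + 1/(2*σ₀^2))
        * Real.sqrt n * Real.exp (-(n:ℝ) * (((θ₀-θ₁)/2)^2/(2*σ₀^2))) := by
  set d : ℝ := (θ₀-θ₁)/2 with hd
  set m : ℝ := (θ₀+θ₁)/2 with hm
  set M : ℝ := θ₀ + d with hM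
  set R : ℝ := max |m| (|M|+1) + |μ₀| with hR
  set K : ℝ := R^2/(2*τ₀^2) + 1/(2*σ₀^2) with hK
  have hd0 : 0 < d := by rw [hd]; linarith
  have hn0 : (0:ℝ) < n := by exact_mod_cast hn
  set b : ℝ := (∑ i, x i) / n with hbdef
  have hb : (n:ℝ) * b = ∑ i, x i := by rw [hbdef]; field_simp
  have hb1 : m ≤ b := by rw [hbdef, le_div_iff₀ hn0]; linarith
  have hb2 : b ≤ M := by rw [hbdef, div_le_iff₀ hn0]; linarith
  set u : ℝ := (Real.sqrt n)⁻¹ with hu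
  have hsq : (0:ℝ) < Real.sqrt n := Real.sqrt_pos.mpr hn0
  have hu0 : 0 < u := by positivity
  have hu1 : u ≤ 1 := by
    rw [hu]
    refine inv_le_one_of_one_le₀ ?_
    rw [show (1:ℝ) = Real.sqrt 1 from (Real.sqrt_one).symm]
    exact Real.sqrt_le_sqrt (by exact_mod_cast hn)
  have hu2 : u^2 = ((n:ℝ))⁻¹ := by
    rw [hu, inv_pow, Real.sq_sqrt hn0.le]
  set e0 : ℝ := Real.exp (-((∑ i, (x i)^2) - n * b^2) / (2*σ₀^2)) with he0
  have he0pos : 0 < e0 := Real.exp_pos _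
  set I₁ : ℝ := ∫ θ : ℝ, Real.exp (-(θ-μ₀)^2/(2*τ₀^2)) with hI₁
  have hI₁0 : 0 ≤ I₁ := integral_nonneg (fun θ => (Real.exp_pos _).le)
  have hker : ∀ θ : ℝ, nnKernel n μ₀ τ₀ σ₀ x θ
      = e0 * Real.exp (-(θ-μ₀)^2/(2*τ₀^2) - n*(θ-b)^2/(2*σ₀^2)) :=
    fun θ => nnKernel_factor hσ hτ x hb θ
  -- numerator bound
  have hnum : ∫ θ in Set.Iic θ₁, nnKernel n μ₀ τ₀ σ₀ x θ
      ≤ e0 * Real.exp (-(n:ℝ) * (d^2/(2*σ₀^2))) * I₁ := by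
    have h1 : ∫ θ in Set.Iic θ₁, nnKernel n μ₀ τ₀ σ₀ x θ
        ≤ ∫ θ in Set.Iic θ₁,
            (e0 * Real.exp (-(n:ℝ) * (d^2/(2*σ₀^2)))) * Real.exp (-(θ-μ₀)^2/(2*τ₀^2)) := by
      refine setIntegral_mono_on (nnKernel_integrable hτ x).integrableOn
        (((integrable_prior hτ μ₀).const_mul _).integrableOn) measurableSet_Iic ?_
      intro θ hθ'
      rw [Set.mem_Iic] at hθ'
      rw [hker θ, mul_assoc]
      refine mul_le_mul_of_nonneg_left ?_ he0pos.le
      rw [← Real.exp_add]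
      refine Real.exp_le_exp.mpr ?_
      have hbθ : d ≤ b - θ := by
        have hmd : m - θ₁ = d := by rw [hm, hd]; ring
        linarith
      have hsq2 : d^2 ≤ (θ - b)^2 := by nlinarith
      have hfrac : (n:ℝ) * (d^2/(2*σ₀^2)) ≤ (n:ℝ)*(θ-b)^2/(2*σ₀^2) := by
        rw [mul_div_assoc]
        refine mul_le_mul_of_nonneg_left ?_ hn0.le
        gcongr
      linarith
    refine h1.trans ?_
    rw [integral_const_mul]
    exact mul_le_mul_of_nonneg_left
      (setIntegral_le_integral (integrable_prior hτ μ₀)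
        (ae_of_all _ (fun θ => (Real.exp_pos _).le)))
      (by positivity)
  -- denominator bound
  have hden : e0 * Real.exp (-K) * u ≤ ∫ θ, nnKernel n μ₀ τ₀ σ₀ x θ := by
    have h2 : ∫ θ in Set.Icc b (b+u), (e0 * Real.exp (-K))
        ≤ ∫ θ in Set.Icc b (b+u), nnKernel n μ₀ τ₀ σ₀ x θ := by
      refine setIntegral_mono_on (integrableOn_const ?_)
        (nnKernel_integrable hτ x).integrableOn measurableSet_Icc ?_
      · rw [Real.volume_Icc]; exact ENNReal.ofReal_ne_top
      intro θ hθ'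
      obtain ⟨hθl, hθr⟩ := hθ'
      rw [hker θ]
      refine mul_le_mul_of_nonneg_left ?_ he0pos.le
      refine Real.exp_le_exp.mpr ?_
      have hθM : θ ≤ |M| + 1 := by
        have hMa : M ≤ |M| := le_abs_self M
        linarith
      have hθm : -|m| ≤ θ := by
        have : -|m| ≤ m := neg_abs_le m
        linarith
      have h1' : |m| ≤ max |m| (|M|+1) := le_max_left _ _
      have h2' : |M|+1 ≤ max |m| (|M|+1) := le_max_right _ _
      have h3' : -|μ₀| ≤ μ₀ := neg_abs_le μ₀
      have h4' : μ₀ ≤ |μ₀| := le_abs_self μ₀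
      have hsq3 : (θ-μ₀)^2 ≤ R^2 := by
        refine sq_le_sq' ?_ ?_
        · rw [hR]; linarith
        · rw [hR]; linarith
      have hsq4 : (n:ℝ)*(θ-b)^2 ≤ 1 := by
        have h5' : (θ-b)^2 ≤ u^2 := by nlinarith
        have h6' := mul_le_mul_of_nonneg_left h5' hn0.le
        rw [hu2] at h6'
        calc (n:ℝ)*(θ-b)^2 ≤ (n:ℝ) * ((n:ℝ))⁻¹ := h6'
        _ = 1 := mul_inv_cancel₀ hn0.ne'
      have hA : (θ-μ₀)^2/(2*τ₀^2) ≤ R^2/(2*τ₀^2) := by gcongr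
      have hB : (n:ℝ)*(θ-b)^2/(2*σ₀^2) ≤ 1/(2*σ₀^2) := by gcongr
      rw [hK, show -(θ-μ₀)^2/(2*τ₀^2) - (n:ℝ)*(θ-b)^2/(2*σ₀^2)
        = -((θ-μ₀)^2/(2*τ₀^2) + (n:ℝ)*(θ-b)^2/(2*σ₀^2)) from by ring]
      exact neg_le_neg (add_le_add hA hB)
    have h3 : ∫ θ in Set.Icc b (b+u), nnKernel n μ₀ τ₀ σ₀ x θ
        ≤ ∫ θ, nnKernel n μ₀ τ₀ σ₀ x θ :=
      setIntegral_le_integral (nnKernel_integrable hτ x)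
        (ae_of_all _ (fun θ => (nnKernel_pos x θ).le))
    have h4 : ∫ θ in Set.Icc b (b+u), (e0 * Real.exp (-K)) = u * (e0 * Real.exp (-K)) := by
      rw [setIntegral_const, Real.volume_real_Icc_of_le (by linarith), add_sub_cancel_left,
        smul_eq_mul]
    rw [h4] at h2
    have h5 := h2.trans h3
    linarith
  -- combine
  have hdenpos : 0 < e0 * Real.exp (-K) * u := by positivity
  have hF : (nnPosterior n μ₀ τ₀ σ₀ x (Set.Iic θ₁)).toReal
      = (∫ θ in Set.Iic θ₁, nnKernel n μ₀ τ₀ σ₀ x θ) / (∫ θ, nnKernel n μ₀ τ₀ σ₀ x θ) :=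
    posterior_apply hτ x measurableSet_Iic
  rw [hF]
  have hdiv : (∫ θ in Set.Iic θ₁, nnKernel n μ₀ τ₀ σ₀ x θ) / (∫ θ, nnKernel n μ₀ τ₀ σ₀ x θ)
      ≤ (e0 * Real.exp (-(n:ℝ) * (d^2/(2*σ₀^2))) * I₁) / (e0 * Real.exp (-K) * u) :=
    div_le_div₀ (by exact mul_nonneg (mul_nonneg he0pos.le (Real.exp_nonneg _)) hI₁0)
      hnum hdenpos hden
  have heq : (e0 * Real.exp (-(n:ℝ) * (d^2/(2*σ₀^2))) * I₁) / (e0 * Real.exp (-K) * u)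
      = I₁ * Real.exp K * Real.sqrt n * Real.exp (-(n:ℝ) * (d^2/(2*σ₀^2))) := by
    rw [hu, Real.exp_neg]
    field_simp
  exact hdiv.trans (le_of_eq heq)

lemma Phi_bound (hσ : 0 < σ₀) (hθ : θ₁ < θ₀) (n : ℕ) :
    stdNormalCDF (Real.sqrt n * (θ₁ - θ₀) / (Real.sqrt 2 * σ₀))
      ≤ ((Real.sqrt (2*Real.pi))⁻¹ * ∫ z : ℝ, Real.exp (-z^2/2))
          * Real.exp (-(n:ℝ)*(((θ₀-θ₁)/2)^2/(2*σ₀^2))) := by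
  have hI₂ : 0 ≤ ∫ z : ℝ, Real.exp (-z^2/2) := integral_nonneg (fun z => (Real.exp_pos _).le)
  have ht : Real.sqrt n * (θ₁ - θ₀) / (Real.sqrt 2 * σ₀) ≤ 0 := by
    exact div_nonpos_of_nonpos_of_nonneg
      (mul_nonpos_of_nonneg_of_nonpos (Real.sqrt_nonneg _) (by linarith)) (by positivity)
  have h := stdNormalCDF_le ht
  rw [mul_assoc] at h ⊢
  refine h.trans (mul_le_mul_of_nonneg_left ?_ (by positivity))
  refine mul_le_mul_of_nonneg_left ?_ hI₂
  refine Real.exp_le_exp.mpr ?_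
  have htsq : (Real.sqrt n * (θ₁ - θ₀) / (Real.sqrt 2 * σ₀))^2
      = (n:ℝ) * (θ₁-θ₀)^2 / (2*σ₀^2) := by
    rw [div_pow, mul_pow, mul_pow, Real.sq_sqrt (by positivity : (0:ℝ) ≤ (n:ℝ)),
      Real.sq_sqrt (by norm_num : (0:ℝ) ≤ 2)]
  rw [htsq]
  have ha : (0:ℝ) ≤ (n:ℝ)*(θ₀-θ₁)^2/(2*σ₀^2) := by positivity
  have hb : (n:ℝ)*(θ₁-θ₀)^2/(2*σ₀^2) = (n:ℝ)*(θ₀-θ₁)^2/(2*σ₀^2) := by ring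
  rw [hb]
  rw [show -(n:ℝ)*(((θ₀-θ₁)/2)^2/(2*σ₀^2)) = -((n:ℝ)*(θ₀-θ₁)^2/(2*σ₀^2))/4 from by ring]
  linarith

lemma F_integral_bound (hσ : 0 < σ₀) (hτ : 0 < τ₀) (hθ : θ₁ < θ₀) {n : ℕ} (hn : 1 ≤ n) :
    ∫ x, (nnPosterior n μ₀ τ₀ σ₀ x (Set.Iic θ₁)).toReal ∂(nnData n θ₀ σ₀)
      ≤ ((∫ θ : ℝ, Real.exp (-(θ-μ₀)^2/(2*τ₀^2)))
          * Real.exp ((max |(θ₀+θ₁)/2| (|θ₀+(θ₀-θ₁)/2|+1) + |μ₀|)^2/(2*τ₀^2) + 1/(2*σ₀^2))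
          * Real.sqrt n + 2) * Real.exp (-(n:ℝ)*(((θ₀-θ₁)/2)^2/(2*σ₀^2))) := by
  have hd0 : 0 < (θ₀-θ₁)/2 := by linarith
  have hε0 : 0 < (((θ₀-θ₁)/2)^2/(2*σ₀^2)) := by positivity
  have hβ0 : 0 < Real.exp (-(n:ℝ)*(((θ₀-θ₁)/2)^2/(2*σ₀^2))) := Real.exp_pos _
  set lam : ℝ := ((θ₀-θ₁)/2)/σ₀^2 with hlamdef
  have hlam : 0 < lam := by positivity
  -- tail bounds
  have htail1 := nnData_tail_le (θ₀ := θ₀) hσ (n := n) (lam := lam)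
    (r := (n:ℝ)*((θ₀+θ₁)/2)) hlam
  have hexp1 : lam * ((n:ℝ)*((θ₀+θ₁)/2)) + n*(-(lam*θ₀) + lam^2*σ₀^2/2)
      = -(n:ℝ)*(((θ₀-θ₁)/2)^2/(2*σ₀^2)) := by
    rw [hlamdef]
    field_simp
    ring
  rw [hexp1] at htail1
  have htail2 := nnData_tail_ge (θ₀ := θ₀) hσ (n := n) (lam := lam)
    (r := (n:ℝ)*(θ₀+(θ₀-θ₁)/2)) hlam
  have hexp2 : -(lam * ((n:ℝ)*(θ₀+(θ₀-θ₁)/2))) + n*(lam*θ₀ + lam^2*σ₀^2/2)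
      = -(n:ℝ)*(((θ₀-θ₁)/2)^2/(2*σ₀^2)) := by
    rw [hlamdef]
    field_simp
    ring
  rw [hexp2] at htail2
  -- event
  set E : Set (Fin n → ℝ) := (fun x : Fin n → ℝ => ∑ i, x i) ⁻¹'
    (Set.Icc ((n:ℝ)*((θ₀+θ₁)/2)) ((n:ℝ)*(θ₀+(θ₀-θ₁)/2))) with hEdef
  have hsm : Measurable (fun x : Fin n → ℝ => ∑ i, x i) :=
    Finset.measurable_sum Finset.univ (fun i _ => measurable_pi_apply i)
  have hE : MeasurableSet E := hsm measurableSet_Icc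
  haveI : IsProbabilityMeasure (nnData n θ₀ σ₀) := by
    rw [nnData]; infer_instance
  have hFmeas := measurable_F (n := n) (μ₀ := μ₀) (σ₀ := σ₀) hτ θ₁
  have hFint : Integrable (fun x => (nnPosterior n μ₀ τ₀ σ₀ x (Set.Iic θ₁)).toReal)
      (nnData n θ₀ σ₀) := by
    refine (integrable_const (1:ℝ)).mono' hFmeas.aestronglyMeasurable (ae_of_all _ fun x => ?_)
    rw [Real.norm_eq_abs, abs_of_nonneg (posterior_nonneg x _)]
    exact posterior_le_one hτ x _
  have hsplit : ∫ x, (nnPosterior n μ₀ τ₀ σ₀ x (Set.Iic θ₁)).toReal ∂(nnData n θ₀ σ₀)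
      = (∫ x in E, (nnPosterior n μ₀ τ₀ σ₀ x (Set.Iic θ₁)).toReal ∂(nnData n θ₀ σ₀))
        + ∫ x in Eᶜ, (nnPosterior n μ₀ τ₀ σ₀ x (Set.Iic θ₁)).toReal ∂(nnData n θ₀ σ₀) :=
    (integral_add_compl hE hFint).symm
  -- on E
  have hIE : ∫ x in E, (nnPosterior n μ₀ τ₀ σ₀ x (Set.Iic θ₁)).toReal ∂(nnData n θ₀ σ₀)
      ≤ (∫ θ : ℝ, Real.exp (-(θ-μ₀)^2/(2*τ₀^2)))
          * Real.exp ((max |(θ₀+θ₁)/2| (|θ₀+(θ₀-θ₁)/2|+1) + |μ₀|)^2/(2*τ₀^2) + 1/(2*σ₀^2))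
          * Real.sqrt n * Real.exp (-(n:ℝ)*(((θ₀-θ₁)/2)^2/(2*σ₀^2))) := by
    have hδ0 : (0:ℝ) ≤ (∫ θ : ℝ, Real.exp (-(θ-μ₀)^2/(2*τ₀^2)))
        * Real.exp ((max |(θ₀+θ₁)/2| (|θ₀+(θ₀-θ₁)/2|+1) + |μ₀|)^2/(2*τ₀^2) + 1/(2*σ₀^2))
        * Real.sqrt n * Real.exp (-(n:ℝ)*(((θ₀-θ₁)/2)^2/(2*σ₀^2))) := by
      have h0 : (0:ℝ) ≤ ∫ θ : ℝ, Real.exp (-(θ-μ₀)^2/(2*τ₀^2)) :=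
        integral_nonneg (fun θ => (Real.exp_pos _).le)
      positivity
    have h1 : ∫ x in E, (nnPosterior n μ₀ τ₀ σ₀ x (Set.Iic θ₁)).toReal ∂(nnData n θ₀ σ₀)
        ≤ ∫ _x in E, ((∫ θ : ℝ, Real.exp (-(θ-μ₀)^2/(2*τ₀^2)))
          * Real.exp ((max |(θ₀+θ₁)/2| (|θ₀+(θ₀-θ₁)/2|+1) + |μ₀|)^2/(2*τ₀^2) + 1/(2*σ₀^2))
          * Real.sqrt n * Real.exp (-(n:ℝ)*(((θ₀-θ₁)/2)^2/(2*σ₀^2)))) ∂(nnData n θ₀ σ₀) := by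
      refine setIntegral_mono_on hFint.integrableOn
        (integrableOn_const (measure_ne_top _ _)) hE ?_
      intro x hx
      have hx1 : (n:ℝ)*((θ₀+θ₁)/2) ≤ ∑ i, x i := hx.1
      have hx2 : ∑ i, x i ≤ (n:ℝ)*(θ₀+(θ₀-θ₁)/2) := hx.2
      exact ratio_bound hσ hτ hθ hn x hx1 hx2
    refine h1.trans ?_
    rw [setIntegral_const, smul_eq_mul]
    refine mul_le_of_le_one_left hδ0 ?_
    have := ENNReal.toReal_mono ENNReal.one_ne_top (prob_le_one (μ := nnData n θ₀ σ₀) (s := E))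
    simpa using this
  -- off E
  have hIEc : ∫ x in Eᶜ, (nnPosterior n μ₀ τ₀ σ₀ x (Set.Iic θ₁)).toReal ∂(nnData n θ₀ σ₀)
      ≤ 2 * Real.exp (-(n:ℝ)*(((θ₀-θ₁)/2)^2/(2*σ₀^2))) := by
    have h2 : ∫ x in Eᶜ, (nnPosterior n μ₀ τ₀ σ₀ x (Set.Iic θ₁)).toReal ∂(nnData n θ₀ σ₀)
        ≤ ∫ _x in Eᶜ, (1:ℝ) ∂(nnData n θ₀ σ₀) := by
      refine setIntegral_mono_on hFint.integrableOn
        (integrableOn_const (measure_ne_top _ _)) hE.compl ?_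
      exact fun x _ => posterior_le_one hτ x _
    have hsub : Eᶜ ⊆ {x : Fin n → ℝ | ∑ i, x i ≤ (n:ℝ)*((θ₀+θ₁)/2)}
        ∪ {x : Fin n → ℝ | (n:ℝ)*(θ₀+(θ₀-θ₁)/2) ≤ ∑ i, x i} := by
      intro x hx
      simp only [Set.mem_union, Set.mem_setOf_eq]
      by_contra hcon
      push_neg at hcon
      exact hx ⟨hcon.1.le, hcon.2.le⟩
    have hle : nnData n θ₀ σ₀ Eᶜ
        ≤ nnData n θ₀ σ₀ {x : Fin n → ℝ | ∑ i, x i ≤ (n:ℝ)*((θ₀+θ₁)/2)}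
          + nnData n θ₀ σ₀ {x : Fin n → ℝ | (n:ℝ)*(θ₀+(θ₀-θ₁)/2) ≤ ∑ i, x i} :=
      (measure_mono hsub).trans (measure_union_le _ _)
    have hfin : nnData n θ₀ σ₀ {x : Fin n → ℝ | ∑ i, x i ≤ (n:ℝ)*((θ₀+θ₁)/2)}
          + nnData n θ₀ σ₀ {x : Fin n → ℝ | (n:ℝ)*(θ₀+(θ₀-θ₁)/2) ≤ ∑ i, x i} ≠ ⊤ :=
      ENNReal.add_ne_top.mpr ⟨measure_ne_top _ _, measure_ne_top _ _⟩
    have h3 := ENNReal.toReal_mono hfin hle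
    rw [ENNReal.toReal_add (measure_ne_top _ _) (measure_ne_top _ _)] at h3
    have h4 : (nnData n θ₀ σ₀ Eᶜ).toReal
        ≤ 2 * Real.exp (-(n:ℝ)*(((θ₀-θ₁)/2)^2/(2*σ₀^2))) := by linarith
    refine h2.trans ?_
    rw [setIntegral_const, smul_eq_mul, mul_one]
    exact h4
  have hfinal := hsplit
  linarith

lemma F_integrable (hτ : 0 < τ₀) (θ₀ θ₁ : ℝ) (n : ℕ) :
    Integrable (fun x => (nnPosterior n μ₀ τ₀ σ₀ x (Set.Iic θ₁)).toReal) (nnData n θ₀ σ₀) := by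
  haveI : IsProbabilityMeasure (nnData n θ₀ σ₀) := by rw [nnData]; infer_instance
  refine (integrable_const (1:ℝ)).mono'
    (measurable_F hτ θ₁).aestronglyMeasurable (ae_of_all _ fun x => ?_)
  rw [Real.norm_eq_abs, abs_of_nonneg (posterior_nonneg x _)]
  exact posterior_le_one hτ x _

lemma integral_Ioi_eq (hτ : 0 < τ₀) (θ₀ θ₁ : ℝ) (hσ : 0 < σ₀) (n : ℕ) :
    ∫ x, (nnPosterior n μ₀ τ₀ σ₀ x (Set.Ioi θ₁)).toReal ∂(nnData n θ₀ σ₀)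
      = 1 - ∫ x, (nnPosterior n μ₀ τ₀ σ₀ x (Set.Iic θ₁)).toReal ∂(nnData n θ₀ σ₀) := by
  haveI : IsProbabilityMeasure (nnData n θ₀ σ₀) := by rw [nnData]; infer_instance
  have h1 : ∫ x, (nnPosterior n μ₀ τ₀ σ₀ x (Set.Ioi θ₁)).toReal ∂(nnData n θ₀ σ₀)
      = ∫ x, (1 - (nnPosterior n μ₀ τ₀ σ₀ x (Set.Iic θ₁)).toReal) ∂(nnData n θ₀ σ₀) := by
    refine integral_congr_ae (ae_of_all _ fun x => ?_)
    exact posterior_Ioi hτ x θ₁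
  rw [h1, integral_sub (integrable_const 1) (F_integrable hτ θ₀ θ₁ n), integral_const,
    measureReal_def, measure_univ, ENNReal.toReal_one, one_smul]

lemma final_skeleton (A J ε : ℝ) (hA : 0 ≤ A) (hJ : 0 ≤ J) (hε : 0 < ε)
    (G F Φf : ℕ → ℝ)
    (hG : ∀ n, G n = 1 - F n)
    (hF0 : ∀ n, 0 ≤ F n)
    (hFb : ∀ n : ℕ, 1 ≤ n → F n ≤ (A * Real.sqrt n + 2) * Real.exp (-(n:ℝ)*ε))
    (hΦ0 : ∀ n, 0 ≤ Φf n)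
    (hΦb : ∀ n : ℕ, Φf n ≤ J * Real.exp (-(n:ℝ)*ε)) :
    (∃ C : ℝ, 0 < C ∧ ∃ N : ℕ, ∀ n : ℕ, N ≤ n →
        |G n - (1 - Φf n)| ≤ C * (n:ℝ) ^ (-(1:ℝ)/2)) ∧
    Tendsto G atTop (nhds 1) := by
  set c₀ : ℝ := A + 2 + J + 1 with hc₀def
  have hc₀ : 0 < c₀ := by rw [hc₀def]; linarith
  -- tendsto auxiliary
  have hT : Tendsto (fun k : ℕ => 2*c₀*(k:ℝ)^2*Real.exp (-(k:ℝ)*ε)) atTop (nhds 0) := by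
    have h1 : Tendsto (fun y : ℝ => y^2 * Real.exp (-y)) atTop (nhds 0) :=
      tendsto_pow_mul_exp_neg_atTop_nhds_zero 2
    have h2 : Tendsto (fun k : ℕ => ε*(k:ℝ)) atTop atTop :=
      Tendsto.const_mul_atTop hε tendsto_natCast_atTop_atTop
    have h3 := h1.comp h2
    have h4 : (fun k : ℕ => 2*c₀*(k:ℝ)^2*Real.exp (-(k:ℝ)*ε))
        = fun k : ℕ => (2*c₀/ε^2) * ((ε*(k:ℝ))^2 * Real.exp (-(ε*(k:ℝ)))) := by
      funext k
      rw [show (-(k:ℝ)*ε) = -(ε*(k:ℝ)) from by ring]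
      field_simp
    rw [h4]
    simpa using h3.const_mul (2*c₀/ε^2)
  obtain ⟨N₁, hN₁⟩ := eventually_atTop.mp (hT.eventually_lt_const one_pos)
  -- key bound
  have key : ∀ n : ℕ, max N₁ 1 ≤ n → Φf n + F n ≤ (Real.sqrt n)⁻¹ := by
    intro n hn
    have hn1 : 1 ≤ n := le_trans (le_max_right _ _) hn
    have hnN₁ : N₁ ≤ n := le_trans (le_max_left _ _) hn
    have hkey := hN₁ n hnN₁
    have hn0 : (0:ℝ) < n := by exact_mod_cast hn1
    have hn1R : (1:ℝ) ≤ n := by exact_mod_cast hn1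
    have hs1 : 1 ≤ Real.sqrt n := Real.one_le_sqrt.mpr hn1R
    have hs0 : (0:ℝ) < Real.sqrt n := lt_of_lt_of_le one_pos hs1
    have hs2 : (Real.sqrt n)^2 = (n:ℝ) := Real.sq_sqrt hn0.le
    have hsle : Real.sqrt n ≤ (n:ℝ) := by nlinarith
    have hβ0 : 0 < Real.exp (-(n:ℝ)*ε) := Real.exp_pos _
    have step1 : Φf n + F n ≤ (A * Real.sqrt n + 2 + J) * Real.exp (-(n:ℝ)*ε) := by
      have := hΦb n
      have := hFb n hn1
      nlinarith
    have e1 : Real.sqrt n * Real.exp (-(n:ℝ)*ε) ≤ (n:ℝ) * Real.exp (-(n:ℝ)*ε) :=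
      mul_le_mul_of_nonneg_right hsle hβ0.le
    have e2 : (A * Real.sqrt n + 2 + J) * Real.exp (-(n:ℝ)*ε) * Real.sqrt n
        = A * ((n:ℝ) * Real.exp (-(n:ℝ)*ε))
          + (2+J) * (Real.sqrt n * Real.exp (-(n:ℝ)*ε)) := by
      have e2' : (A * Real.sqrt n + 2 + J) * Real.exp (-(n:ℝ)*ε) * Real.sqrt n
          = A * ((Real.sqrt n)^2 * Real.exp (-(n:ℝ)*ε))
            + (2+J) * (Real.sqrt n * Real.exp (-(n:ℝ)*ε)) := by ring
      rw [hs2] at e2'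
      exact e2'
    have e3 : A * ((n:ℝ) * Real.exp (-(n:ℝ)*ε))
          + (2+J) * (Real.sqrt n * Real.exp (-(n:ℝ)*ε))
        ≤ (A + 2 + J) * ((n:ℝ) * Real.exp (-(n:ℝ)*ε)) := by
      have := mul_le_mul_of_nonneg_left e1 (by linarith : (0:ℝ) ≤ 2 + J)
      linarith
    have t2 : (n:ℝ) * Real.exp (-(n:ℝ)*ε) ≤ 2*(n:ℝ)^2*Real.exp (-(n:ℝ)*ε) := by
      nlinarith
    have e5 : (A + 2 + J) * ((n:ℝ) * Real.exp (-(n:ℝ)*ε)) ≤ 2*c₀*(n:ℝ)^2*Real.exp (-(n:ℝ)*ε) := by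
      calc (A + 2 + J) * ((n:ℝ) * Real.exp (-(n:ℝ)*ε))
          ≤ c₀ * ((n:ℝ) * Real.exp (-(n:ℝ)*ε)) :=
            mul_le_mul_of_nonneg_right (by rw [hc₀def]; linarith) (by positivity)
        _ ≤ c₀ * (2*(n:ℝ)^2*Real.exp (-(n:ℝ)*ε)) := mul_le_mul_of_nonneg_left t2 hc₀.le
        _ = 2*c₀*(n:ℝ)^2*Real.exp (-(n:ℝ)*ε) := by ring
    have hss : (A * Real.sqrt n + 2 + J) * Real.exp (-(n:ℝ)*ε) * Real.sqrt n ≤ 1 := by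
      rw [e2]
      linarith
    have hfin : (A * Real.sqrt n + 2 + J) * Real.exp (-(n:ℝ)*ε) ≤ (Real.sqrt n)⁻¹ := by
      have h6 := mul_le_mul_of_nonneg_right hss (inv_nonneg.mpr hs0.le)
      rw [one_mul, mul_assoc, mul_inv_cancel₀ hs0.ne', mul_one] at h6
      exact h6
    exact step1.trans hfin
  constructor
  · refine ⟨1, one_pos, max N₁ 1, fun n hn => ?_⟩
    have hrpow : (1:ℝ) * (n:ℝ) ^ (-(1:ℝ)/2) = (Real.sqrt n)⁻¹ := by
      rw [one_mul, show (-(1:ℝ)/2) = -(2⁻¹:ℝ) from by norm_num,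
        Real.rpow_neg (Nat.cast_nonneg n)]
      congr 1
      rw [Real.sqrt_eq_rpow]
      norm_num
    rw [hG n, show (1 - F n) - (1 - Φf n) = Φf n - F n from by ring, hrpow]
    refine le_trans ((abs_sub _ _).trans ?_) (key n hn)
    rw [abs_of_nonneg (hΦ0 n), abs_of_nonneg (hF0 n)]
  · have hsinv : Tendsto (fun n : ℕ => (Real.sqrt (n:ℝ))⁻¹) atTop (nhds 0) := by
      have h1 : Tendsto (fun x : ℝ => x ^ ((1:ℝ)/2)) atTop atTop :=
        tendsto_rpow_atTop (by norm_num)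
      have h2 := h1.comp (tendsto_natCast_atTop_atTop (R := ℝ))
      have h3 : (fun n : ℕ => Real.sqrt (n:ℝ)) = fun n : ℕ => ((n:ℝ) ^ ((1:ℝ)/2)) :=
        funext fun n => Real.sqrt_eq_rpow _
      have h4 : Tendsto (fun n : ℕ => Real.sqrt (n:ℝ)) atTop atTop := by
        rw [h3]; exact h2
      exact h4.inv_tendsto_atTop
    have hFto : Tendsto F atTop (nhds 0) := by
      refine tendsto_of_tendsto_of_tendsto_of_le_of_le' tendsto_const_nhds hsinv
        (Eventually.of_forall hF0) ?_
      filter_upwards [eventually_ge_atTop (max N₁ 1)] with n hn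
      have := key n hn
      have := hΦ0 n
      linarith
    have : G = fun n => 1 - F n := funext hG
    rw [this]
    have := tendsto_const_nhds (x := (1:ℝ)) (f := atTop (α := ℕ)) |>.sub hFto
    simpa using this

end Core

/-- Effect-size probability in the Normal–Normal model: for `θ₁ < θ₀`,
`|E_{θ₀}[W((θ₁,∞)|Xⁿ)] − (1 − Φ(√n(θ₁−θ₀)/(√2 σ₀)))| ≤ C n^{−1/2}` for all large `n`; in
particular `E_{θ₀}[W((θ₁,∞)|Xⁿ)] → 1`. -/
theorem normal_normal_effect_size
    (μ₀ τ₀ σ₀ θ₀ θ₁ : ℝ) (hσ : 0 < σ₀) (hτ : 0 < τ₀) (hθ : θ₁ < θ₀) :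
    (∃ C : ℝ, 0 < C ∧ ∃ N : ℕ, ∀ n : ℕ, N ≤ n →
        |(∫ x, (nnPosterior n μ₀ τ₀ σ₀ x (Set.Ioi θ₁)).toReal ∂nnData n θ₀ σ₀)
            - (1 - stdNormalCDF (Real.sqrt (n : ℝ) * (θ₁ - θ₀) / (Real.sqrt 2 * σ₀)))|
          ≤ C * (n : ℝ) ^ (-(1 : ℝ) / 2)) ∧
    Tendsto
      (fun n : ℕ => ∫ x, (nnPosterior n μ₀ τ₀ σ₀ x (Set.Ioi θ₁)).toReal ∂nnData n θ₀ σ₀)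
      atTop (nhds 1) := by
  have hA : 0 ≤ (∫ θ : ℝ, Real.exp (-(θ-μ₀)^2/(2*τ₀^2)))
      * Real.exp ((max |(θ₀+θ₁)/2| (|θ₀+(θ₀-θ₁)/2|+1) + |μ₀|)^2/(2*τ₀^2) + 1/(2*σ₀^2)) :=
    mul_nonneg (integral_nonneg fun θ => (Real.exp_pos _).le) (Real.exp_nonneg _)
  have hJ : 0 ≤ (Real.sqrt (2*Real.pi))⁻¹ * ∫ z : ℝ, Real.exp (-z^2/2) :=
    mul_nonneg (by positivity) (integral_nonneg fun z => (Real.exp_pos _).le)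
  have hd : 0 < (θ₀-θ₁)/2 := by linarith
  have hε : 0 < ((θ₀-θ₁)/2)^2/(2*σ₀^2) := by positivity
  exact final_skeleton _ _ _ hA hJ hε
    (fun n => ∫ x, (nnPosterior n μ₀ τ₀ σ₀ x (Set.Ioi θ₁)).toReal ∂nnData n θ₀ σ₀)
    (fun n => ∫ x, (nnPosterior n μ₀ τ₀ σ₀ x (Set.Iic θ₁)).toReal ∂nnData n θ₀ σ₀)
    (fun n => stdNormalCDF (Real.sqrt (n:ℝ) * (θ₁ - θ₀) / (Real.sqrt 2 * σ₀)))
    (fun n => integral_Ioi_eq hτ θ₀ θ₁ hσ n)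
    (fun n => integral_nonneg fun x => posterior_nonneg x _)
    (fun n hn => F_integral_bound hσ hτ hθ hn)
    (fun n => stdNormalCDF_nonneg _)
    (fun n => Phi_bound hσ hθ n)
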